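/- Let Γ = (ℤ/3ℤ) ∗ (ℤ/2ℤ) be the free product, with u the image in Γ of a generator of ℤ/3ℤ and v the image in Γ of the generator of ℤ/2ℤ. Then the elements u^{-1}vu^{-1} and vu^{-1}vu^{-1}v generate a free subgroup of Γ of rank 2; equivalently, the homomorphism from the free group on two generators to Γ sending the generators to u^{-1}vu^{-1} and vu^{-1}vu^{-1}v is injective. -/

import Mathlib

noncomputable section

abbrev Irr : Type := {x : ℝ // Irrational x}

namespace FreeSubAux

lemma irr_one_sub_inv (x : Irr) : Irrational (1 - x.1)⁻¹ := by
  simpa using (x.2.intCast_sub 1).inv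

lemma irr_one_sub_inv' (x : Irr) : Irrational (1 - x.1⁻¹) := by
  simpa using (x.2.inv).intCast_sub 1

/-- `u : t ↦ 1/(1-t)`, an order-3 Möbius permutation of the irrationals. -/
def uPerm : Equiv.Perm Irr where
  toFun x := ⟨(1 - x.1)⁻¹, irr_one_sub_inv x⟩
  invFun x := ⟨1 - x.1⁻¹, irr_one_sub_inv' x⟩
  left_inv x := by
    ext
    have h : (1:ℝ) - x.1 ≠ 0 := sub_ne_zero.mpr (Ne.symm x.2.ne_one)
    field_simp
    ring
  right_inv x := by
    ext
    have h0 : x.1 ≠ 0 := x.2.ne_zero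
    have h : (1:ℝ) - x.1⁻¹ ≠ 0 := by
      rw [sub_ne_zero]
      intro hh
      exact x.2.ne_one (by rw [← inv_inv x.1, ← hh, inv_one])
    field_simp
    ring

/-- `v : t ↦ -1/t`, an order-2 Möbius permutation of the irrationals. -/
def vPerm : Equiv.Perm Irr where
  toFun x := ⟨-x.1⁻¹, x.2.inv.neg⟩
  invFun x := ⟨-x.1⁻¹, x.2.inv.neg⟩
  left_inv x := by
    ext
    have h0 : x.1 ≠ 0 := x.2.ne_zero
    field_simp
  right_inv x := by
    ext
    have h0 : x.1 ≠ 0 := x.2.ne_zero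
    field_simp

lemma uPerm_pow_three : uPerm ^ 3 = 1 := by
  ext x
  have h0 : x.1 ≠ 0 := x.2.ne_zero
  have h : (1:ℝ) - x.1 ≠ 0 := sub_ne_zero.mpr (Ne.symm x.2.ne_one)
  have h2 : (1:ℝ) - (1 - x.1)⁻¹ ≠ 0 := by
    rw [sub_ne_zero]
    intro hh
    apply h0
    have : (1:ℝ) - x.1 = 1 := by rw [← inv_inv (1 - x.1), ← hh, inv_one]
    linarith
  simp only [pow_succ, pow_zero, one_mul, Equiv.Perm.mul_apply, Equiv.Perm.one_apply]
  show (1 - (1 - (1 - x.1)⁻¹)⁻¹)⁻¹ = x.1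
  rw [inv_eq_iff_eq_inv]
  rw [sub_eq_iff_eq_add]
  have h3 : (1:ℝ) - (1 - x.1)⁻¹ = -x.1 / (1 - x.1) := by field_simp; ring
  rw [h3, inv_div, div_neg, ← neg_div, neg_sub, inv_eq_one_div, ← add_div]
  have h4 : (1:ℝ) + (x.1 - 1) = x.1 := by ring
  rw [h4, div_self h0]

lemma vPerm_sq : vPerm ^ 2 = 1 := by
  ext x
  simp only [pow_succ, pow_zero, one_mul, Equiv.Perm.mul_apply, Equiv.Perm.one_apply]
  have h0 : x.1 ≠ 0 := x.2.ne_zero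
  show -(-x.1⁻¹)⁻¹ = x.1
  field_simp

/-- `A : t ↦ 2 - 1/t`, the Möbius map of the matrix [[2,-1],[1,0]]. -/
def paPerm : Equiv.Perm Irr where
  toFun x := ⟨2 - x.1⁻¹, by simpa using (x.2.inv).intCast_sub 2⟩
  invFun x := ⟨(2 - x.1)⁻¹, by simpa using (x.2.intCast_sub 2).inv⟩
  left_inv x := by
    ext
    show (2 - (2 - x.1⁻¹))⁻¹ = x.1
    rw [show (2:ℝ) - (2 - x.1⁻¹) = x.1⁻¹ by ring, inv_inv]
  right_inv x := by
    ext
    show 2 - ((2 - x.1)⁻¹)⁻¹ = x.1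
    rw [inv_inv]
    ring

/-- `C : t ↦ t + 4`. -/
def pcPerm : Equiv.Perm Irr where
  toFun x := ⟨x.1 + 4, by simpa using x.2.add_intCast 4⟩
  invFun x := ⟨x.1 - 4, by simpa using x.2.sub_intCast 4⟩
  left_inv x := by ext; show x.1 + 4 - 4 = x.1; ring
  right_inv x := by ext; show x.1 - 4 + 4 = x.1; ring

/-- The hom `Multiplicative (ZMod 3) →* Perm Irr` sending `1` to `uPerm`. -/
def phi3 : Multiplicative (ZMod 3) →* Equiv.Perm Irr :=
  AddMonoidHom.toMultiplicativeLeft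
    (ZMod.lift 3 ⟨zmultiplesHom (Additive (Equiv.Perm Irr)) (Additive.ofMul uPerm), by
      show ((3:ℤ) • Additive.ofMul uPerm) = 0
      have h3 : uPerm ^ (3:ℤ) = 1 := by
        rw [show (3:ℤ) = ((3:ℕ):ℤ) from rfl, zpow_natCast, uPerm_pow_three]
      rw [← ofMul_zpow, h3]
      rfl⟩)

/-- The hom `Multiplicative (ZMod 2) →* Perm Irr` sending `1` to `vPerm`. -/
def phi2 : Multiplicative (ZMod 2) →* Equiv.Perm Irr :=
  AddMonoidHom.toMultiplicativeLeft
    (ZMod.lift 2 ⟨zmultiplesHom (Additive (Equiv.Perm Irr)) (Additive.ofMul vPerm), by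
      show ((2:ℤ) • Additive.ofMul vPerm) = 0
      have h2 : vPerm ^ (2:ℤ) = 1 := by
        rw [show (2:ℤ) = ((2:ℕ):ℤ) from rfl, zpow_natCast, vPerm_sq]
      rw [← ofMul_zpow, h2]
      rfl⟩)

lemma phi3_one : phi3 (Multiplicative.ofAdd (1 : ZMod 3)) = uPerm := by
  have h : (1 : ZMod 3) = ((1:ℤ) : ZMod 3) := by norm_num
  simp only [phi3, AddMonoidHom.coe_toMultiplicativeLeft, Function.comp_apply, toAdd_ofAdd, h,
    ZMod.lift_coe]
  simp

lemma phi2_one : phi2 (Multiplicative.ofAdd (1 : ZMod 2)) = vPerm := by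
  have h : (1 : ZMod 2) = ((1:ℤ) : ZMod 2) := by norm_num
  simp only [phi2, AddMonoidHom.coe_toMultiplicativeLeft, Function.comp_apply, toAdd_ofAdd, h,
    ZMod.lift_coe]
  simp


lemma perm_eq_A : uPerm⁻¹ * vPerm * uPerm⁻¹ = paPerm := by
  ext x
  simp only [Equiv.Perm.mul_apply, Equiv.Perm.inv_def]
  show 1 - (-(1 - x.1⁻¹)⁻¹)⁻¹ = 2 - x.1⁻¹
  rw [inv_neg, inv_inv]
  ring

lemma perm_eq_B : vPerm * uPerm⁻¹ * vPerm * uPerm⁻¹ * vPerm = paPerm⁻¹ * pcPerm := by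
  ext x
  simp only [Equiv.Perm.mul_apply, Equiv.Perm.inv_def]
  show -(1 - (-(1 - (-x.1⁻¹)⁻¹)⁻¹)⁻¹)⁻¹ = (2 - (x.1 + 4))⁻¹
  rw [show (2:ℝ) - (x.1 + 4) = -(x.1 + 2) by ring]
  simp only [inv_neg, inv_inv]
  congr 1
  ring

/-- The generators for the ping-pong lemma. -/
def pingGen : Bool → Equiv.Perm Irr := fun t => if t then paPerm else pcPerm

def pingX : Bool → Set Irr := fun t => if t then {x | 1 < x.1 ∧ x.1 < 3} else {x | 3 < x.1}

def pingY : Bool → Set Irr := fun t => if t then {x | -1 < x.1 ∧ x.1 < 1} else {x | x.1 < -1}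

lemma sqrt2_lt : 1 < Real.sqrt 2 ∧ Real.sqrt 2 < 2 := by
  have h := Real.sq_sqrt (by norm_num : (2:ℝ) ≥ 0)
  have h0 := Real.sqrt_nonneg 2
  constructor <;> nlinarith

lemma pingX_nonempty : ∀ i, (pingX i).Nonempty := by
  intro i
  obtain ⟨hs1, hs2⟩ := sqrt2_lt
  cases i
  · exact ⟨⟨Real.sqrt 2 + 3, by simpa using irrational_sqrt_two.add_intCast 3⟩,
      by show (3:ℝ) < Real.sqrt 2 + 3; linarith⟩
  · exact ⟨⟨Real.sqrt 2, irrational_sqrt_two⟩,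
      by show 1 < Real.sqrt 2 ∧ Real.sqrt 2 < 3; constructor <;> linarith⟩

lemma pingY_nonempty : ∀ i, (pingY i).Nonempty := by
  intro i
  obtain ⟨hs1, hs2⟩ := sqrt2_lt
  cases i
  · exact ⟨⟨-Real.sqrt 2 - 1, by simpa using irrational_sqrt_two.neg.sub_intCast 1⟩,
      by show -Real.sqrt 2 - 1 < -1; linarith⟩
  · exact ⟨⟨Real.sqrt 2 - 1, by simpa using irrational_sqrt_two.sub_intCast 1⟩,
      by show -1 < Real.sqrt 2 - 1 ∧ Real.sqrt 2 - 1 < 1; constructor <;> linarith⟩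

lemma pingX_disj : Pairwise (Function.onFun Disjoint pingX) := by
  intro i j hij
  have : ∀ (k l : Bool), k = true → l = false → Disjoint (pingX k) (pingX l) := by
    rintro _ _ rfl rfl
    rw [Set.disjoint_left]
    rintro x ⟨h1, h2⟩ h3
    exact absurd h3 (by show ¬ (3:ℝ) < x.1; linarith)
  cases i <;> cases j
  · exact absurd rfl hij
  · exact (this true false rfl rfl).symm
  · exact this true false rfl rfl
  · exact absurd rfl hij

lemma pingY_disj : Pairwise (Function.onFun Disjoint pingY) := by
  intro i j hij
  have : ∀ (k l : Bool), k = true → l = false → Disjoint (pingY k) (pingY l) := by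
    rintro _ _ rfl rfl
    rw [Set.disjoint_left]
    rintro x ⟨h1, h2⟩ h3
    exact absurd h3 (by show ¬ x.1 < (-1:ℝ); linarith)
  cases i <;> cases j
  · exact absurd rfl hij
  · exact (this true false rfl rfl).symm
  · exact this true false rfl rfl
  · exact absurd rfl hij

lemma pingXY_disj : ∀ i j, Disjoint (pingX i) (pingY j) := by
  intro i j
  rw [Set.disjoint_left]
  cases i <;> cases j <;> intro x hx hy
  · exact absurd hy (by show ¬ x.1 < (-1:ℝ); have : (3:ℝ) < x.1 := hx; linarith)
  · obtain ⟨h1, h2⟩ := hy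
    have : (3:ℝ) < x.1 := hx
    linarith
  · obtain ⟨h1, h2⟩ := hx
    have : x.1 < (-1:ℝ) := hy
    linarith
  · obtain ⟨h1, h2⟩ := hx
    obtain ⟨h3, h4⟩ := hy
    linarith

open Pointwise in
lemma ping_hX : ∀ i, pingGen i • (pingY i)ᶜ ⊆ pingX i := by
  intro i y hy
  rw [Set.mem_smul_set] at hy
  obtain ⟨x, hx, rfl⟩ := hy
  have hne0 : x.1 ≠ 0 := x.2.ne_zero
  cases i
  · -- pcPerm : t ↦ t + 4 ; x ∉ {t < -1}
    have h1 : ¬ x.1 < -1 := hx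
    have hnem1 : x.1 ≠ -1 := by simpa using x.2.ne_int (-1)
    show (3:ℝ) < x.1 + 4
    rcases lt_or_eq_of_le (not_lt.mp h1) with h | h
    · linarith
    · exact absurd h.symm hnem1
  · -- paPerm : t ↦ 2 - t⁻¹ ; x ∉ (-1, 1)
    have h1 : ¬ (-1 < x.1 ∧ x.1 < 1) := hx
    have hne1 : x.1 ≠ 1 := x.2.ne_one
    have hnem1 : x.1 ≠ -1 := by simpa using x.2.ne_int (-1)
    show 1 < 2 - x.1⁻¹ ∧ 2 - x.1⁻¹ < 3
    push_neg at h1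
    rcases lt_or_ge x.1 (-1) with h | h
    · have h2 : (0:ℝ) < -x.1⁻¹ := by
        rw [← inv_neg]
        exact inv_pos.mpr (by linarith)
      have h3 : (-x.1)⁻¹ < 1 := inv_lt_one_of_one_lt₀ (by linarith)
      rw [inv_neg] at h3
      constructor <;> linarith
    · have hgt : 1 < x.1 := by
        rcases lt_or_eq_of_le h with h' | h'
        · have := h1 h'
          rcases lt_or_eq_of_le this with h'' | h''
          · exact h''
          · exact absurd h''.symm hne1
        · exact absurd h'.symm hnem1
      have h2 : (0:ℝ) < x.1⁻¹ := inv_pos.mpr (by linarith)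
      have h3 : x.1⁻¹ < 1 := inv_lt_one_of_one_lt₀ hgt
      constructor <;> linarith

open Pointwise in
lemma ping_hY : ∀ i, (pingGen)⁻¹ i • (pingX i)ᶜ ⊆ pingY i := by
  intro i y hy
  rw [Set.mem_smul_set] at hy
  obtain ⟨x, hx, rfl⟩ := hy
  cases i
  · -- pcPerm⁻¹ : t ↦ t - 4 ; x ∉ {3 < t}
    have h1 : ¬ (3:ℝ) < x.1 := hx
    have hne3 : x.1 ≠ 3 := by simpa using x.2.ne_int 3
    show x.1 - 4 < -1
    rcases lt_or_eq_of_le (not_lt.mp h1) with h | h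
    · linarith
    · exact absurd h hne3
  · -- paPerm⁻¹ : t ↦ (2 - t)⁻¹ ; x ∉ (1, 3)
    have h1 : ¬ (1 < x.1 ∧ x.1 < 3) := hx
    have hne1 : x.1 ≠ 1 := x.2.ne_one
    have hne3 : x.1 ≠ 3 := by simpa using x.2.ne_int 3
    show -1 < (2 - x.1)⁻¹ ∧ (2 - x.1)⁻¹ < 1
    push_neg at h1
    rcases lt_or_ge x.1 1 with h | h
    · have h2 : (0:ℝ) < (2 - x.1)⁻¹ := inv_pos.mpr (by linarith)
      have h3 : (2 - x.1)⁻¹ < 1 := inv_lt_one_of_one_lt₀ (by linarith)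
      constructor <;> linarith
    · have hgt : 3 < x.1 := by
        rcases lt_or_eq_of_le h with h' | h'
        · have := h1 h'
          rcases lt_or_eq_of_le this with h'' | h''
          · exact h''
          · exact absurd h''.symm hne3
        · exact absurd h'.symm hne1
      have h2 : (0:ℝ) < -(2 - x.1)⁻¹ := by
        rw [← inv_neg]
        exact inv_pos.mpr (by linarith)
      have h3 : (-(2 - x.1))⁻¹ < 1 := inv_lt_one_of_one_lt₀ (by linarith)
      rw [inv_neg] at h3
      constructor <;> linarith

lemma rho_injective : Function.Injective (FreeGroup.lift pingGen) :=
  FreeGroup.injective_lift_of_ping_pong pingGen pingX pingY pingX_nonempty pingX_disj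
    pingY_disj pingXY_disj ping_hX ping_hY

/-- Nielsen transformation `x ↦ x, y ↦ x⁻¹y`. -/
def psi : FreeGroup Bool →* FreeGroup Bool :=
  FreeGroup.lift (fun t => if t then FreeGroup.of true else (FreeGroup.of true)⁻¹ * FreeGroup.of false)

def psi2 : FreeGroup Bool →* FreeGroup Bool :=
  FreeGroup.lift (fun t => if t then FreeGroup.of true else FreeGroup.of true * FreeGroup.of false)

lemma psi2_comp_psi : psi2.comp psi = MonoidHom.id _ := by
  apply FreeGroup.ext_hom
  intro b
  cases b <;> simp [psi, psi2]

lemma psi_injective : Function.Injective ⇑psi := by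
  have h : ∀ w, psi2 (psi w) = w := by
    intro w
    rw [← MonoidHom.comp_apply, psi2_comp_psi, MonoidHom.id_apply]
  exact Function.LeftInverse.injective h

end FreeSubAux

open FreeSubAux in
theorem free_subgroup_of_coprod' :
    Function.Injective
      (FreeGroup.lift (fun t : Bool =>
          let u : Monoid.Coprod (Multiplicative (ZMod 3)) (Multiplicative (ZMod 2)) :=
            Monoid.Coprod.inl (Multiplicative.ofAdd (1 : ZMod 3))
          let v : Monoid.Coprod (Multiplicative (ZMod 3)) (Multiplicative (ZMod 2)) :=
            Monoid.Coprod.inr (Multiplicative.ofAdd (1 : ZMod 2))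
          if t then u⁻¹ * v * u⁻¹ else v * u⁻¹ * v * u⁻¹ * v) :
        FreeGroup Bool →* Monoid.Coprod (Multiplicative (ZMod 3)) (Multiplicative (ZMod 2))) := by
  apply Function.Injective.of_comp (f := ⇑(Monoid.Coprod.lift phi3 phi2))
  rw [← MonoidHom.coe_comp]
  have key : (Monoid.Coprod.lift phi3 phi2).comp
      (FreeGroup.lift (fun t : Bool =>
          let u : Monoid.Coprod (Multiplicative (ZMod 3)) (Multiplicative (ZMod 2)) :=
            Monoid.Coprod.inl (Multiplicative.ofAdd (1 : ZMod 3))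
          let v : Monoid.Coprod (Multiplicative (ZMod 3)) (Multiplicative (ZMod 2)) :=
            Monoid.Coprod.inr (Multiplicative.ofAdd (1 : ZMod 2))
          if t then u⁻¹ * v * u⁻¹ else v * u⁻¹ * v * u⁻¹ * v)) =
      (FreeGroup.lift pingGen).comp psi := by
    apply FreeGroup.ext_hom
    intro b
    cases b
    · -- generator `false`, mapped to `v u⁻¹ v u⁻¹ v` resp. `paPerm⁻¹ * pcPerm`
      rw [MonoidHom.comp_apply, MonoidHom.comp_apply, FreeGroup.lift_apply_of]
      show (Monoid.Coprod.lift phi3 phi2)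
          ((Monoid.Coprod.inr (Multiplicative.ofAdd (1 : ZMod 2))) *
            (Monoid.Coprod.inl (Multiplicative.ofAdd (1 : ZMod 3)))⁻¹ *
            (Monoid.Coprod.inr (Multiplicative.ofAdd (1 : ZMod 2))) *
            (Monoid.Coprod.inl (Multiplicative.ofAdd (1 : ZMod 3)))⁻¹ *
            (Monoid.Coprod.inr (Multiplicative.ofAdd (1 : ZMod 2)))) =
          (FreeGroup.lift pingGen) (psi (FreeGroup.of false))
    
      rw [show psi (FreeGroup.of false) = (FreeGroup.of true)⁻¹ * FreeGroup.of false from by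
        simp [psi]]
      simp only [map_mul, map_inv, Monoid.Coprod.lift_apply_inl, Monoid.Coprod.lift_apply_inr,
        phi3_one, phi2_one, FreeGroup.lift_apply_of]
      show vPerm * uPerm⁻¹ * vPerm * uPerm⁻¹ * vPerm = paPerm⁻¹ * pcPerm
      exact perm_eq_B
    · -- generator `true`, mapped to `u⁻¹ v u⁻¹` resp. `paPerm`
      rw [MonoidHom.comp_apply, MonoidHom.comp_apply, FreeGroup.lift_apply_of]
      show (Monoid.Coprod.lift phi3 phi2)
          ((Monoid.Coprod.inl (Multiplicative.ofAdd (1 : ZMod 3)))⁻¹ *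
            (Monoid.Coprod.inr (Multiplicative.ofAdd (1 : ZMod 2))) *
            (Monoid.Coprod.inl (Multiplicative.ofAdd (1 : ZMod 3)))⁻¹) =
          (FreeGroup.lift pingGen) (psi (FreeGroup.of true))
      rw [show psi (FreeGroup.of true) = FreeGroup.of true from by simp [psi]]
      simp only [map_mul, map_inv, Monoid.Coprod.lift_apply_inl, Monoid.Coprod.lift_apply_inr,
        phi3_one, phi2_one, FreeGroup.lift_apply_of]
      show uPerm⁻¹ * vPerm * uPerm⁻¹ = paPerm
      exact perm_eq_A
  rw [key, MonoidHom.coe_comp]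
  exact rho_injective.comp psi_injective

end

/-- **Lemma.** Let `Γ = (ℤ/3ℤ) ∗ (ℤ/2ℤ)` be the free product, `u` the image in `Γ` of the
generator `1` of `ℤ/3ℤ` and `v` the image of the generator of `ℤ/2ℤ`. Then `u⁻¹ v u⁻¹`
and `v u⁻¹ v u⁻¹ v` generate a free subgroup of `Γ` of rank `2`: the homomorphism from
the free group on two generators sending them to these elements is injective. -/
theorem free_subgroup_of_coprod :
    Function.Injective
      (FreeGroup.lift (fun t : Bool =>
          let u : Monoid.Coprod (Multiplicative (ZMod 3)) (Multiplicative (ZMod 2)) :=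
            Monoid.Coprod.inl (Multiplicative.ofAdd (1 : ZMod 3))
          let v : Monoid.Coprod (Multiplicative (ZMod 3)) (Multiplicative (ZMod 2)) :=
            Monoid.Coprod.inr (Multiplicative.ofAdd (1 : ZMod 2))
          if t then u⁻¹ * v * u⁻¹ else v * u⁻¹ * v * u⁻¹ * v) :
        FreeGroup Bool →* Monoid.Coprod (Multiplicative (ZMod 3)) (Multiplicative (ZMod 2))) :=
  free_subgroup_of_coprod'
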